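/- If the energy–momentum endomorphism Q is positive semidefinite (i.e. ⟨λ, Qλ⟩ ≥ 0 for every λ ∈ ℂ⁴), then E₀ ≥ √( L² − 2·V² + 2·√( max{A⁴ − L²·V², 0} ) ). (This is the energy-momentum inequality of the positive energy theorem for asymptotically anti-de Sitter spacetimes, in terms of the positive semidefiniteness of Q established via Witten's spinor argument.) -/

import Mathlib

open Matrix Complex ComplexOrder

set_option maxHeartbeats 4000000

/-- The energy–momentum endomorphism `Q` of an asymptotically anti-de Sitter
initial data set, as a 4×4 complex matrix. -/
noncomputable def QMatrix (E₀ c₁ c₂ c₃ c₁' c₂' c₃' J₁ J₂ J₃ : ℝ) :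
    Matrix (Fin 4) (Fin 4) ℂ :=
  let w₁ : ℂ := (c₃' : ℂ) - I * J₃
  let w₂p : ℂ := -(c₁' : ℂ) + (J₂ : ℂ) + I * ((c₂' : ℂ) + J₁)
  let w₂m : ℂ := -(c₁' : ℂ) - (J₂ : ℂ) - I * ((c₂' : ℂ) - J₁)
  !![(E₀ : ℂ) - c₃, (c₁ : ℂ) - I * c₂, w₁, w₂p;
     (c₁ : ℂ) + I * c₂, (E₀ : ℂ) + c₃, w₂m, -w₁;
     starRingEnd ℂ w₁, starRingEnd ℂ w₂m, (E₀ : ℂ) + c₃, -(c₁ : ℂ) + I * c₂;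
     starRingEnd ℂ w₂p, -(starRingEnd ℂ w₁), -(c₁ : ℂ) - I * c₂, (E₀ : ℂ) - c₃]

/-- The positive energy theorem for asymptotically anti-de Sitter spacetimes: if the
energy–momentum endomorphism `Q` is positive semidefinite, then
`E₀ ≥ √(L² − 2V² + 2·√(max{A⁴ − L²V², 0}))`. -/
lemma psd_det_nonneg' {n : Type*} [Fintype n] [DecidableEq n] {M : Matrix n n ℂ}
    (hM : M.PosSemidef) : 0 ≤ M.det := by
  rw [hM.1.det_eq_prod_eigenvalues]
  exact Finset.prod_nonneg fun i _ =>
    Complex.zero_le_real.2 (hM.eigenvalues_nonneg i)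

lemma det_fin_four' {R : Type*} [CommRing R] (A : Matrix (Fin 4) (Fin 4) R) :
    A.det =
      A 0 0 * (A 1 1 * (A 2 2 * A 3 3 - A 2 3 * A 3 2) - A 1 2 * (A 2 1 * A 3 3 - A 2 3 * A 3 1)
        + A 1 3 * (A 2 1 * A 3 2 - A 2 2 * A 3 1))
      - A 0 1 * (A 1 0 * (A 2 2 * A 3 3 - A 2 3 * A 3 2) - A 1 2 * (A 2 0 * A 3 3 - A 2 3 * A 3 0)
        + A 1 3 * (A 2 0 * A 3 2 - A 2 2 * A 3 0))
      + A 0 2 * (A 1 0 * (A 2 1 * A 3 3 - A 2 3 * A 3 1) - A 1 1 * (A 2 0 * A 3 3 - A 2 3 * A 3 0)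
        + A 1 3 * (A 2 0 * A 3 1 - A 2 1 * A 3 0))
      - A 0 3 * (A 1 0 * (A 2 1 * A 3 2 - A 2 2 * A 3 1) - A 1 1 * (A 2 0 * A 3 2 - A 2 2 * A 3 0)
        + A 1 2 * (A 2 0 * A 3 1 - A 2 1 * A 3 0)) := by
  have e1 : (Fin.succ 2 : Fin 4) = 3 := rfl
  have a00 : Fin.succAbove (0:Fin 4) 0 = 1 := by decide
  have a01 : Fin.succAbove (0:Fin 4) 1 = 2 := by decide
  have a02 : Fin.succAbove (0:Fin 4) 2 = 3 := by decide
  have a10 : Fin.succAbove (1:Fin 4) 0 = 0 := by decide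
  have a11 : Fin.succAbove (1:Fin 4) 1 = 2 := by decide
  have a12 : Fin.succAbove (1:Fin 4) 2 = 3 := by decide
  have a20 : Fin.succAbove (2:Fin 4) 0 = 0 := by decide
  have a21 : Fin.succAbove (2:Fin 4) 1 = 1 := by decide
  have a22 : Fin.succAbove (2:Fin 4) 2 = 3 := by decide
  have a30 : Fin.succAbove (3:Fin 4) 0 = 0 := by decide
  have a31 : Fin.succAbove (3:Fin 4) 1 = 1 := by decide
  have a32 : Fin.succAbove (3:Fin 4) 2 = 2 := by decide
  simp [Matrix.det_succ_row_zero, Fin.sum_univ_succ, Fin.succ_zero_eq_one, Fin.succ_one_eq_two,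
    e1, a00, a01, a02, a10, a11, a12, a20, a21, a22, a30, a31, a32, Matrix.det_fin_three,
    Matrix.submatrix_apply]
  ring


lemma final_algebra (E₀ L A V : ℝ) (h1 : 0 ≤ E₀) (h2' : 0 ≤ 3*E₀^2 - L^2)
    (h3' : 0 ≤ 4*E₀^3 - 4*L^2*E₀ + 8*V^3)
    (h4' : 0 ≤ E₀^4 - 2*L^2*E₀^2 + 8*V^3*E₀ + (L^2)^2 - 4*A^4) :
    E₀ ≥ Real.sqrt (L ^ 2 - 2 * V ^ 2 + 2 * Real.sqrt (max (A ^ 4 - L ^ 2 * V ^ 2) 0)) := by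
  have hg : 0 ≤ E₀^2 + 2*V^2 - L^2 := by
    by_contra hneg
    push_neg at hneg
    have hpos : 0 < L^2 - E₀^2 - 2*V^2 := by linarith
    have t1 : 0 ≤ V^3 - V^2*E₀ := by nlinarith [h3', mul_nonneg h1 hpos.le]
    have t2 : 0 < E₀^2 - V^2 := by linarith
    by_cases hV0 : V = 0
    · subst hV0
      have hE0 : 0 < E₀ := by nlinarith [t2]
      nlinarith [h3', mul_pos hpos hE0]
    · have hVsq : 0 < V^2 := by positivity
      have hVE : 0 ≤ V - E₀ := by nlinarith [t1, hVsq]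
      nlinarith [hVE, h1, t2]
  have hc : 4*(A^4 - L^2*V^2) ≤ (E₀^2 + 2*V^2 - L^2)^2 := by
    nlinarith [h4', sq_nonneg (V*(E₀ - V))]
  have key : L^2 - 2*V^2 + 2*Real.sqrt (max (A^4 - L^2*V^2) 0) ≤ E₀^2 := by
    have hm : max (A^4 - L^2*V^2) 0 ≤ ((E₀^2 + 2*V^2 - L^2)/2)^2 := by
      refine max_le (by nlinarith [hc]) (by positivity)
    have hs := Real.sqrt_le_sqrt hm
    rw [Real.sqrt_sq (by linarith : (0:ℝ) ≤ (E₀^2 + 2*V^2 - L^2)/2)] at hs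
    linarith
  calc Real.sqrt (L ^ 2 - 2 * V ^ 2 + 2 * Real.sqrt (max (A ^ 4 - L ^ 2 * V ^ 2) 0))
      ≤ Real.sqrt (E₀^2) := Real.sqrt_le_sqrt (by linarith [key])
    _ = E₀ := Real.sqrt_sq h1

theorem positive_energy_theorem
    (E₀ c₁ c₂ c₃ c₁' c₂' c₃' J₁ J₂ J₃ L A V : ℝ)
    (hL0 : 0 ≤ L)
    (hL : L ^ 2 = ![c₁, c₂, c₃] ⬝ᵥ ![c₁, c₂, c₃]
      + ![c₁', c₂', c₃'] ⬝ᵥ ![c₁', c₂', c₃'] + ![J₁, J₂, J₃] ⬝ᵥ ![J₁, J₂, J₃])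
    (hA0 : 0 ≤ A)
    (hA : A ^ 4 =
        (![c₁, c₂, c₃] ⨯₃ ![c₁', c₂', c₃']) ⬝ᵥ (![c₁, c₂, c₃] ⨯₃ ![c₁', c₂', c₃'])
      + (![c₁, c₂, c₃] ⨯₃ ![J₁, J₂, J₃]) ⬝ᵥ (![c₁, c₂, c₃] ⨯₃ ![J₁, J₂, J₃])
      + (![c₁', c₂', c₃'] ⨯₃ ![J₁, J₂, J₃]) ⬝ᵥ (![c₁', c₂', c₃'] ⨯₃ ![J₁, J₂, J₃]))
    (hV : V ^ 3 = ![c₁, c₂, c₃] ⬝ᵥ (![c₁', c₂', c₃'] ⨯₃ ![J₁, J₂, J₃]))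
    (hQ : (QMatrix E₀ c₁ c₂ c₃ c₁' c₂' c₃' J₁ J₂ J₃).PosSemidef) :
    E₀ ≥ Real.sqrt (L ^ 2 - 2 * V ^ 2 + 2 * Real.sqrt (max (A ^ 4 - L ^ 2 * V ^ 2) 0)) := by
  have hI2 : (I:ℂ)^2 = -1 := Complex.I_sq
  have hI3 : (I:ℂ)^3 = -I := by rw [pow_succ, hI2]; ring
  have hI4 : (I:ℂ)^4 = 1 := by rw [pow_succ, hI3]; simp [Complex.I_mul_I]
  set Q := QMatrix E₀ c₁ c₂ c₃ c₁' c₂' c₃' J₁ J₂ J₃ with hQdef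
  -- 1x1 principal minors
  have d1a := psd_det_nonneg' (hQ.submatrix ![(0:Fin 4)])
  have d1b := psd_det_nonneg' (hQ.submatrix ![(1:Fin 4)])
  have e1c : (Q.submatrix ![(0:Fin 4)] ![(0:Fin 4)]).det
      + (Q.submatrix ![(1:Fin 4)] ![(1:Fin 4)]).det = ((2*E₀ : ℝ) : ℂ) := by
    rw [Matrix.det_fin_one, Matrix.det_fin_one]
    simp only [hQdef, QMatrix, Matrix.submatrix_apply, Matrix.cons_val', Matrix.cons_val_zero,
      Matrix.cons_val_one, Matrix.head_cons, Matrix.empty_val', Matrix.cons_val_fin_one,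
      Matrix.head_fin_const, Matrix.of_apply, Matrix.cons_val_two, Matrix.tail_cons,
      Matrix.cons_val_three, map_sub, map_add, map_neg, _root_.map_mul,
      Complex.conj_ofReal, Complex.conj_I]
    push_cast; ring
  have r1 : (0:ℝ) ≤ 2*E₀ := by
    refine Complex.zero_le_real.1 ?_
    rw [← e1c]; exact add_nonneg d1a d1b
  -- 2x2 principal minors
  have d2a := psd_det_nonneg' (hQ.submatrix ![(0:Fin 4), 1])
  have d2b := psd_det_nonneg' (hQ.submatrix ![(0:Fin 4), 2])
  have d2c := psd_det_nonneg' (hQ.submatrix ![(0:Fin 4), 3])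
  have d2d := psd_det_nonneg' (hQ.submatrix ![(1:Fin 4), 2])
  have d2e := psd_det_nonneg' (hQ.submatrix ![(1:Fin 4), 3])
  have d2f := psd_det_nonneg' (hQ.submatrix ![(2:Fin 4), 3])
  have e2c : (Q.submatrix ![(0:Fin 4), 1] ![(0:Fin 4), 1]).det
      + (Q.submatrix ![(0:Fin 4), 2] ![(0:Fin 4), 2]).det
      + (Q.submatrix ![(0:Fin 4), 3] ![(0:Fin 4), 3]).det
      + (Q.submatrix ![(1:Fin 4), 2] ![(1:Fin 4), 2]).det
      + (Q.submatrix ![(1:Fin 4), 3] ![(1:Fin 4), 3]).det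
      + (Q.submatrix ![(2:Fin 4), 3] ![(2:Fin 4), 3]).det
      = ((6*E₀^2 - 2*(c₁^2+c₂^2+c₃^2+c₁'^2+c₂'^2+c₃'^2+J₁^2+J₂^2+J₃^2) : ℝ) : ℂ) := by
    rw [Matrix.det_fin_two, Matrix.det_fin_two, Matrix.det_fin_two, Matrix.det_fin_two,
      Matrix.det_fin_two, Matrix.det_fin_two]
    simp only [hQdef, QMatrix, Matrix.submatrix_apply, Matrix.cons_val', Matrix.cons_val_zero,
      Matrix.cons_val_one, Matrix.head_cons, Matrix.empty_val', Matrix.cons_val_fin_one,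
      Matrix.head_fin_const, Matrix.of_apply, Matrix.cons_val_two, Matrix.tail_cons,
      Matrix.cons_val_three, map_sub, map_add, map_neg, _root_.map_mul,
      Complex.conj_ofReal, Complex.conj_I]
    push_cast
    ring_nf
    simp only [hI2, hI3, hI4]
    ring
  have r2 : (0:ℝ) ≤ 6*E₀^2 - 2*(c₁^2+c₂^2+c₃^2+c₁'^2+c₂'^2+c₃'^2+J₁^2+J₂^2+J₃^2) := by
    refine Complex.zero_le_real.1 ?_
    rw [← e2c]
    exact add_nonneg (add_nonneg (add_nonneg (add_nonneg (add_nonneg d2a d2b) d2c) d2d) d2e) d2f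
  -- 3x3 principal minors
  have d3a := psd_det_nonneg' (hQ.submatrix ![(1:Fin 4), 2, 3])
  have d3b := psd_det_nonneg' (hQ.submatrix ![(0:Fin 4), 2, 3])
  have d3c := psd_det_nonneg' (hQ.submatrix ![(0:Fin 4), 1, 3])
  have d3d := psd_det_nonneg' (hQ.submatrix ![(0:Fin 4), 1, 2])
  have e3c : (Q.submatrix ![(1:Fin 4), 2, 3] ![(1:Fin 4), 2, 3]).det
      + (Q.submatrix ![(0:Fin 4), 2, 3] ![(0:Fin 4), 2, 3]).det
      + (Q.submatrix ![(0:Fin 4), 1, 3] ![(0:Fin 4), 1, 3]).det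
      + (Q.submatrix ![(0:Fin 4), 1, 2] ![(0:Fin 4), 1, 2]).det
      = ((4*E₀^3 - 4*(c₁^2+c₂^2+c₃^2+c₁'^2+c₂'^2+c₃'^2+J₁^2+J₂^2+J₃^2)*E₀
          + 8*(c₁*(c₂'*J₃-c₃'*J₂)+c₂*(c₃'*J₁-c₁'*J₃)+c₃*(c₁'*J₂-c₂'*J₁)) : ℝ) : ℂ) := by
    rw [Matrix.det_fin_three, Matrix.det_fin_three, Matrix.det_fin_three, Matrix.det_fin_three]
    simp only [hQdef, QMatrix, Matrix.submatrix_apply, Matrix.cons_val', Matrix.cons_val_zero,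
      Matrix.cons_val_one, Matrix.head_cons, Matrix.empty_val', Matrix.cons_val_fin_one,
      Matrix.head_fin_const, Matrix.of_apply, Matrix.cons_val_two, Matrix.tail_cons,
      Matrix.cons_val_three, map_sub, map_add, map_neg, _root_.map_mul,
      Complex.conj_ofReal, Complex.conj_I]
    push_cast
    ring_nf
    simp only [hI2, hI3, hI4]
    ring
  have r3 : (0:ℝ) ≤ 4*E₀^3 - 4*(c₁^2+c₂^2+c₃^2+c₁'^2+c₂'^2+c₃'^2+J₁^2+J₂^2+J₃^2)*E₀
      + 8*(c₁*(c₂'*J₃-c₃'*J₂)+c₂*(c₃'*J₁-c₁'*J₃)+c₃*(c₁'*J₂-c₂'*J₁)) := by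
    refine Complex.zero_le_real.1 ?_
    rw [← e3c]
    exact add_nonneg (add_nonneg (add_nonneg d3a d3b) d3c) d3d
  -- determinant
  have d4 := psd_det_nonneg' hQ
  have e4c : Q.det =
      ((E₀^4 - 2*(c₁^2+c₂^2+c₃^2+c₁'^2+c₂'^2+c₃'^2+J₁^2+J₂^2+J₃^2)*E₀^2
        + 8*(c₁*(c₂'*J₃-c₃'*J₂)+c₂*(c₃'*J₁-c₁'*J₃)+c₃*(c₁'*J₂-c₂'*J₁))*E₀
        + (c₁^2+c₂^2+c₃^2+c₁'^2+c₂'^2+c₃'^2+J₁^2+J₂^2+J₃^2)^2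
        - 4*(((c₂*c₃'-c₃*c₂')^2+(c₃*c₁'-c₁*c₃')^2+(c₁*c₂'-c₂*c₁')^2)
           + ((c₂*J₃-c₃*J₂)^2+(c₃*J₁-c₁*J₃)^2+(c₁*J₂-c₂*J₁)^2)
           + ((c₂'*J₃-c₃'*J₂)^2+(c₃'*J₁-c₁'*J₃)^2+(c₁'*J₂-c₂'*J₁)^2)) : ℝ) : ℂ) := by
    rw [det_fin_four']
    simp only [hQdef, QMatrix, Matrix.cons_val', Matrix.cons_val_zero, Matrix.cons_val_one,
      Matrix.head_cons, Matrix.empty_val', Matrix.cons_val_fin_one, Matrix.head_fin_const,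
      Matrix.of_apply, Matrix.cons_val_two, Matrix.tail_cons, Matrix.cons_val_three,
      map_sub, map_add, map_neg, _root_.map_mul, Complex.conj_ofReal, Complex.conj_I]
    push_cast
    ring_nf
    simp only [hI2, hI3, hI4]
    ring
  have r4 : (0:ℝ) ≤ E₀^4 - 2*(c₁^2+c₂^2+c₃^2+c₁'^2+c₂'^2+c₃'^2+J₁^2+J₂^2+J₃^2)*E₀^2
        + 8*(c₁*(c₂'*J₃-c₃'*J₂)+c₂*(c₃'*J₁-c₁'*J₃)+c₃*(c₁'*J₂-c₂'*J₁))*E₀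
        + (c₁^2+c₂^2+c₃^2+c₁'^2+c₂'^2+c₃'^2+J₁^2+J₂^2+J₃^2)^2
        - 4*(((c₂*c₃'-c₃*c₂')^2+(c₃*c₁'-c₁*c₃')^2+(c₁*c₂'-c₂*c₁')^2)
           + ((c₂*J₃-c₃*J₂)^2+(c₃*J₁-c₁*J₃)^2+(c₁*J₂-c₂*J₁)^2)
           + ((c₂'*J₃-c₃'*J₂)^2+(c₃'*J₁-c₁'*J₃)^2+(c₁'*J₂-c₂'*J₁)^2)) := by
    refine Complex.zero_le_real.1 ?_
    rw [← e4c]; exact d4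
  -- translate hypotheses hL, hV, hA into polynomial form
  simp only [dotProduct, cross_apply, Fin.sum_univ_three, Matrix.cons_val_zero,
    Matrix.cons_val_one, Matrix.head_cons, Matrix.cons_val_two, Matrix.tail_cons] at hL hA hV
  -- the four symmetric-function inequalities in terms of L, A, V
  have h1 : 0 ≤ E₀ := by linarith only [r1]
  have h2' : 0 ≤ 3*E₀^2 - L^2 := by rw [hL]; linarith only [r2]
  have h3' : 0 ≤ 4*E₀^3 - 4*L^2*E₀ + 8*V^3 := by rw [hL, hV]; exact r3.trans_eq (by ring)
  have h4' : 0 ≤ E₀^4 - 2*L^2*E₀^2 + 8*V^3*E₀ + (L^2)^2 - 4*A^4 := by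
    rw [hL, hV, hA]; exact r4.trans_eq (by ring)
  exact final_algebra E₀ L A V h1 h2' h3' h4'
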